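/- Let Q be a loop-less quiver with arrows totally ordered, and let Q' be the quiver obtained from Q by deleting the maximal arrow i. Then the vertex permutations satisfy ξ⁻_Q = ξ⁻_{Q'} ∘ [s(i), t(i)], where [s(i), t(i)] is the transposition swapping the source and target of i. Consequently, the number of cycles of ξ⁻_Q differs from that of ξ⁻_{Q'} by exactly one. -/

import Mathlib

open Matrix Polynomial

/-- Incidence matrix of a quiver with vertex set `Fin m`, arrow set `Fin n`,
source map `s` and target map `t`: the column of arrow `i` is `e_{s i} - e_{t i}`. -/
def incMatrix {m n : ℕ} (s t : Fin n → Fin m) : Matrix (Fin m) (Fin n) ℤ :=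
  Matrix.of fun v i => (if v = s i then (1 : ℤ) else 0) - (if v = t i then (1 : ℤ) else 0)

/-- Connectedness of the underlying multigraph of the quiver `(s, t)`. -/
def QuiverConnected {m n : ℕ} (s t : Fin n → Fin m) : Prop :=
  ∀ v w : Fin m,
    Relation.ReflTransGen (fun a b => ∃ i : Fin n, (s i = a ∧ t i = b) ∨ (s i = b ∧ t i = a)) v w

/-- The endpoint of arrow `i` other than `v` (for a loop-less quiver). -/
def otherEnd {m n : ℕ} (s t : Fin n → Fin m) (i : Fin n) (v : Fin m) : Fin m :=
  if s i = v then t i else s i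

/-- Iterate the minimally decreasing walk starting at `v`, using only arrows with
index `< b`, always crossing the maximal available arrow. Returns the final vertex. -/
def xiAux {m n : ℕ} (s t : Fin n → Fin m) (b : ℕ) (v : Fin m) : Fin m :=
  if h : (Finset.univ.filter (fun i : Fin n => (s i = v ∨ t i = v) ∧ i.val < b)).Nonempty then
    xiAux s t
      ((Finset.univ.filter (fun i : Fin n => (s i = v ∨ t i = v) ∧ i.val < b)).max' h).val
      (otherEnd s t
        ((Finset.univ.filter (fun i : Fin n => (s i = v ∨ t i = v) ∧ i.val < b)).max' h) v)
  else v
termination_by b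
decreasing_by
  exact (Finset.mem_filter.mp (Finset.max'_mem _ h)).2.2

/-- The permutation of vertices `ξ⁻` determined by structural minimally decreasing walks:
`xiDown s t v` is the end vertex of the structural decreasing walk starting at `v`. -/
def xiDown {m n : ℕ} (s t : Fin n → Fin m) (v : Fin m) : Fin m :=
  xiAux s t n v

/-- Iterate the minimally increasing walk starting at `v`, using only arrows with
index `≥ b`, always crossing the minimal available arrow. Returns the final vertex. -/
def xiAuxUp {m n : ℕ} (s t : Fin n → Fin m) (b : ℕ) (v : Fin m) : Fin m :=
  if h : (Finset.univ.filter (fun i : Fin n => (s i = v ∨ t i = v) ∧ b ≤ i.val)).Nonempty then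
    xiAuxUp s t
      (((Finset.univ.filter (fun i : Fin n => (s i = v ∨ t i = v) ∧ b ≤ i.val)).min' h).val + 1)
      (otherEnd s t
        ((Finset.univ.filter (fun i : Fin n => (s i = v ∨ t i = v) ∧ b ≤ i.val)).min' h) v)
  else v
termination_by n - b
decreasing_by
  have h1 := (Finset.mem_filter.mp (Finset.min'_mem _ h)).2.2
  have h2 := ((Finset.univ.filter (fun i : Fin n => (s i = v ∨ t i = v) ∧ b ≤ i.val)).min' h).isLt
  omega

/-- The map `ξ⁺`: end vertex of the structural minimally increasing walk starting at `v`. -/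
def xiUp {m n : ℕ} (s t : Fin n → Fin m) (v : Fin m) : Fin m :=
  xiAuxUp s t 0 v


/-- Source vertex of a walk-step `(i, ε)`: `s i` if traversed positively, else `t i`. -/
def stepSrc {m n : ℕ} (s t : Fin n → Fin m) (p : Fin n × Bool) : Fin m :=
  if p.2 then s p.1 else t p.1

/-- Target vertex of a walk-step `(i, ε)`. -/
def stepTgt {m n : ℕ} (s t : Fin n → Fin m) (p : Fin n × Bool) : Fin m :=
  if p.2 then t p.1 else s p.1


section XiAuxLemmas

lemma xiAux_castSucc {m n : ℕ} (s t : Fin (n+1) → Fin m) :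
    ∀ b, b ≤ n → ∀ v, xiAux s t b v = xiAux (s ∘ Fin.castSucc) (t ∘ Fin.castSucc) b v := by
  intro b
  induction b using Nat.strong_induction_on with
  | _ b ih =>
    intro hb v
    rw [xiAux, xiAux]
    set F : Finset (Fin (n+1)) :=
      Finset.univ.filter (fun i : Fin (n+1) => (s i = v ∨ t i = v) ∧ i.val < b) with hF
    set F' : Finset (Fin n) :=
      Finset.univ.filter
        (fun i : Fin n => ((s ∘ Fin.castSucc) i = v ∨ (t ∘ Fin.castSucc) i = v) ∧ i.val < b)
      with hF'
    have hmem : ∀ i : Fin (n+1), i ∈ F ↔ (s i = v ∨ t i = v) ∧ i.val < b := by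
      intro i; simp [hF]
    have hmem' : ∀ j : Fin n, j ∈ F' ↔ (s j.castSucc = v ∨ t j.castSucc = v) ∧ j.val < b := by
      intro j; simp [hF']
    have hne : F.Nonempty ↔ F'.Nonempty := by
      constructor
      · rintro ⟨i, hi⟩
        rw [hmem] at hi
        have hlt : i.val < n := lt_of_lt_of_le hi.2 hb
        refine ⟨⟨i.val, hlt⟩, ?_⟩
        rw [hmem']
        have : Fin.castSucc ⟨i.val, hlt⟩ = i := by ext; rfl
        rw [this]; exact hi
      · rintro ⟨j, hj⟩
        rw [hmem'] at hj
        exact ⟨j.castSucc, (hmem _).2 hj⟩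
    by_cases h : F.Nonempty
    · have h' : F'.Nonempty := hne.1 h
      rw [dif_pos h, dif_pos h']
      have hmaxlt : (F.max' h).val < b := ((hmem _).1 (F.max'_mem h)).2
      have hmax_eq : F.max' h = Fin.castSucc (F'.max' h') := by
        apply le_antisymm
        · have hlt : (F.max' h).val < n := lt_of_lt_of_le hmaxlt hb
          have hmem2 := (hmem _).1 (F.max'_mem h)
          have : (⟨(F.max' h).val, hlt⟩ : Fin n) ∈ F' := by
            rw [hmem']
            have hc : Fin.castSucc (⟨(F.max' h).val, hlt⟩ : Fin n) = F.max' h := by ext; rfl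
            rw [hc]; exact hmem2
          have := F'.le_max' _ this
          rw [Fin.le_def] at *
          simpa [Fin.castSucc] using this
        · apply F.le_max'
          rw [hmem]
          exact (hmem' _).1 (F'.max'_mem h')
      have hvals : (F.max' h).val = (F'.max' h').val := by rw [hmax_eq]; rfl
      have hother : otherEnd s t (F.max' h) v
          = otherEnd (s ∘ Fin.castSucc) (t ∘ Fin.castSucc) (F'.max' h') v := by
        rw [hmax_eq]; rfl
      rw [hvals, hother]
      have h1 : (F'.max' h').val < b := hvals ▸ hmaxlt
      exact ih _ h1 (le_of_lt (lt_of_lt_of_le h1 hb)) _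
    · rw [dif_neg h, dif_neg (fun h' => h (hne.2 h'))]

lemma xiDown_step {m n : ℕ} (s t : Fin (n + 1) → Fin m)
    (hloop : ∀ i : Fin (n + 1), s i ≠ t i) (v : Fin m) :
    xiDown s t v
      = xiDown (s ∘ Fin.castSucc) (t ∘ Fin.castSucc)
          (Equiv.swap (s (Fin.last n)) (t (Fin.last n)) v) := by
  set a := s (Fin.last n) with ha
  set b := t (Fin.last n) with hb
  have hab : a ≠ b := hloop _
  show xiAux s t (n+1) v = _
  rw [xiAux]
  set F : Finset (Fin (n+1)) :=
    Finset.univ.filter (fun i : Fin (n+1) => (s i = v ∨ t i = v) ∧ i.val < n + 1) with hF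
  have hmem : ∀ i : Fin (n+1), i ∈ F ↔ (s i = v ∨ t i = v) := by
    intro i; simp [hF, i.isLt, Nat.le_of_lt_succ i.isLt]
  by_cases hv : a = v ∨ b = v
  · have hlast : Fin.last n ∈ F := (hmem _).2 hv
    have h : F.Nonempty := ⟨_, hlast⟩
    rw [dif_pos h]
    have hmax : F.max' h = Fin.last n := le_antisymm (Fin.le_last _) (F.le_max' _ hlast)
    have hother : otherEnd s t (F.max' h) v = Equiv.swap a b v := by
      rw [hmax]
      rcases hv with hv | hv
      · rw [otherEnd, if_pos hv, ← hv, Equiv.swap_apply_left]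
      · have hne : s (Fin.last n) ≠ v := by rw [← hv]; exact hloop _
        rw [otherEnd, if_neg hne, ← hv, Equiv.swap_apply_right]
    have hval : (F.max' h).val = n := by rw [hmax]; rfl
    rw [hval, hother]
    exact xiAux_castSucc s t n le_rfl _
  · push_neg at hv
    have hswap : Equiv.swap a b v = v :=
      Equiv.swap_apply_of_ne_of_ne (fun h => hv.1 h.symm) (fun h => hv.2 h.symm)
    rw [hswap]
    have hFeq : F = Finset.univ.filter
        (fun i : Fin (n+1) => (s i = v ∨ t i = v) ∧ i.val < n) := by
      ext i
      simp only [hF, Finset.mem_filter, Finset.mem_univ, true_and]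
      constructor
      · rintro ⟨hi, _⟩
        refine ⟨hi, ?_⟩
        rcases Nat.lt_succ_iff_lt_or_eq.1 i.isLt with h | h
        · exact h
        · exfalso
          have : i = Fin.last n := Fin.ext h
          rw [this] at hi
          rcases hi with hi | hi
          · exact hv.1 (ha ▸ hi)
          · exact hv.2 (hb ▸ hi)
      · rintro ⟨hi, h2⟩; exact ⟨hi, Nat.lt_succ_of_lt h2⟩
    have : xiDown (s ∘ Fin.castSucc) (t ∘ Fin.castSucc) v
        = xiAux s t n v := (xiAux_castSucc s t n le_rfl v).symm
    rw [this]
    conv_rhs => rw [xiAux]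
    simp only [← hFeq]

section PermLemmas

open Equiv Equiv.Perm

variable {α : Type*} [Fintype α] [DecidableEq α]

lemma parts_card_eq (τ : Equiv.Perm α) :
    τ.partition.parts.card
      = Nat.card (Quotient (Equiv.Perm.SameCycle.setoid τ)) := by
  classical
  have hfix : ∀ x y : α, τ.SameCycle x y → τ x = x → y = x := by
    rintro x y ⟨i, hi⟩ hx
    rw [← hi, zpow_apply_eq_self_of_apply_eq_self hx]
  -- the function from the quotient
  have wd : ∀ x y : α, τ.SameCycle x y →
      (if hx : x ∈ τ.support then
        (Sum.inl ⟨τ.cycleOf x, cycleOf_mem_cycleFactorsFinset_iff.2 hx⟩ :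
          {c // c ∈ τ.cycleFactorsFinset} ⊕ {x // τ x = x})
      else Sum.inr ⟨x, by simpa using hx⟩)
      = (if hy : y ∈ τ.support then
        (Sum.inl ⟨τ.cycleOf y, cycleOf_mem_cycleFactorsFinset_iff.2 hy⟩ :
          {c // c ∈ τ.cycleFactorsFinset} ⊕ {x // τ x = x})
      else Sum.inr ⟨y, by simpa using hy⟩) := by
    intro x y hxy
    by_cases hx : x ∈ τ.support
    · have hy : y ∈ τ.support := by
        by_contra hy
        exact hy ((hfix y x hxy.symm (by simpa using hy)) ▸ hx)
      rw [dif_pos hx, dif_pos hy]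
      simp only [Sum.inl.injEq, Subtype.mk.injEq]
      exact hxy.cycleOf_eq
    · have hy : y ∉ τ.support := by
        intro hy
        have := hfix x y hxy (by simpa using hx)
        rw [this] at hy; exact hx hy
      rw [dif_neg hx, dif_neg hy]
      simp only [Sum.inr.injEq, Subtype.mk.injEq]
      exact (hfix x y hxy (by simpa using hx)).symm
  set g : Quotient (Equiv.Perm.SameCycle.setoid τ) →
      {c // c ∈ τ.cycleFactorsFinset} ⊕ {x // τ x = x} :=
    Quotient.lift _ wd with hg
  have hbij : Function.Bijective g := by
    constructor
    · intro q1 q2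
      induction q1 using Quotient.inductionOn with
      | _ x =>
      induction q2 using Quotient.inductionOn with
      | _ y =>
      intro h
      rw [hg] at h
      simp only [Quotient.lift_mk] at h
      apply Quotient.sound
      by_cases hx : x ∈ τ.support
      · by_cases hy : y ∈ τ.support
        · rw [dif_pos hx, dif_pos hy] at h
          simp only [Sum.inl.injEq, Subtype.mk.injEq] at h
          have hyy : y ∈ (τ.cycleOf x).support := by
            rw [h]
            exact mem_support_cycleOf_iff.2 ⟨Equiv.Perm.SameCycle.refl _ _, hy⟩
          exact (mem_support_cycleOf_iff.1 hyy).1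
        · rw [dif_pos hx, dif_neg hy] at h
          exact absurd h (by simp)
      · by_cases hy : y ∈ τ.support
        · rw [dif_neg hx, dif_pos hy] at h
          exact absurd h (by simp)
        · rw [dif_neg hx, dif_neg hy] at h
          simp only [Sum.inr.injEq, Subtype.mk.injEq] at h
          exact h ▸ Equiv.Perm.SameCycle.refl _ _
    · rintro (⟨c, hc⟩ | ⟨x, hx⟩)
      · have hcc : c.IsCycle := (mem_cycleFactorsFinset_iff.1 hc).1
        obtain ⟨x, hx⟩ := hcc.nonempty_support
        have hcx : c = τ.cycleOf x := cycle_is_cycleOf hx hc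
        have hxs : x ∈ τ.support := by
          rw [mem_support]
          have := (mem_cycleFactorsFinset_iff.1 hc).2 x hx
          rw [← this]
          exact mem_support.1 hx
        refine ⟨Quotient.mk _ x, ?_⟩
        rw [hg]
        simp only [Quotient.lift_mk]
        rw [dif_pos hxs]
        simp [hcx]
      · refine ⟨Quotient.mk _ x, ?_⟩
        rw [hg]
        simp only [Quotient.lift_mk]
        rw [dif_neg (by simpa using hx)]
  rw [Nat.card_eq_of_bijective g hbij]
  rw [Nat.card_sum, Nat.card_eq_fintype_card, Nat.card_eq_fintype_card]
  rw [Equiv.Perm.parts_partition, Multiset.card_add, Multiset.card_replicate,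
    Equiv.Perm.cycleType_def, Multiset.card_map]
  congr 1
  · simp [Fintype.card_coe]
  · rw [Fintype.card_subtype]
    rw [← Finset.card_compl τ.support]
    congr 1
    ext x
    simp [Equiv.Perm.mem_support, eq_comm]

lemma quot_card_mul_swap_le (τ : Equiv.Perm α) (a b : α) :
    Nat.card (Quotient (Equiv.Perm.SameCycle.setoid (τ * Equiv.swap a b)))
      ≤ Nat.card (Quotient (Equiv.Perm.SameCycle.setoid τ)) + 1 := by
  classical
  set τ' := τ * Equiv.swap a b with hτ'
  set D : α → α → Prop := fun x y =>
    τ'.SameCycle x y ∨ (τ'.SameCycle x a ∧ τ'.SameCycle y b) ∨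
      (τ'.SameCycle x b ∧ τ'.SameCycle y a) with hD
  have hDequiv : Equivalence D := by
    constructor
    · intro x; exact Or.inl (Equiv.Perm.SameCycle.refl _ _)
    · intro x y h
      rcases h with h | ⟨h1, h2⟩ | ⟨h1, h2⟩
      · exact Or.inl h.symm
      · exact Or.inr (Or.inr ⟨h2, h1⟩)
      · exact Or.inr (Or.inl ⟨h2, h1⟩)
    · intro x y z hxy hyz
      rcases hxy with h | ⟨h1, h2⟩ | ⟨h1, h2⟩ <;>
        rcases hyz with g | ⟨g1, g2⟩ | ⟨g1, g2⟩
      · exact Or.inl (h.trans g)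
      · exact Or.inr (Or.inl ⟨h.trans g1, g2⟩)
      · exact Or.inr (Or.inr ⟨h.trans g1, g2⟩)
      · exact Or.inr (Or.inl ⟨h1, g.symm.trans h2⟩)
      · exact Or.inl ((h1.trans (g1.symm.trans h2)).trans g2.symm)
      · exact Or.inl (h1.trans g2.symm)
      · exact Or.inr (Or.inr ⟨h1, g.symm.trans h2⟩)
      · exact Or.inl (h1.trans g2.symm)
      · exact Or.inl ((h1.trans (g1.symm.trans h2)).trans g2.symm)
  have happly : ∀ x : α, τ'.SameCycle x (τ' x) := fun x => ⟨1, by simp⟩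
  have key : ∀ x : α, D x (τ x) := by
    intro x
    by_cases hxa : x = a
    · rw [hxa]
      have hba : τ' b = τ a := by
        rw [hτ']; simp [Equiv.Perm.mul_apply, Equiv.swap_apply_right]
      exact Or.inr (Or.inl ⟨Equiv.Perm.SameCycle.refl _ _, hba ▸ (happly b).symm⟩)
    · by_cases hxb : x = b
      · rw [hxb]
        have hab2 : τ' a = τ b := by
          rw [hτ']; simp [Equiv.Perm.mul_apply, Equiv.swap_apply_left]
        exact Or.inr (Or.inr ⟨Equiv.Perm.SameCycle.refl _ _, hab2 ▸ (happly a).symm⟩)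
      · have hx : τ' x = τ x := by
          rw [hτ']; simp [Equiv.Perm.mul_apply, Equiv.swap_apply_of_ne_of_ne hxa hxb]
        exact Or.inl (hx ▸ happly x)
  have keyinv : ∀ x : α, D x (τ⁻¹ x) := by
    intro x
    have := key (τ⁻¹ x)
    rw [show τ (τ⁻¹ x) = x from by simp] at this
    exact hDequiv.symm this
  have hzpow : ∀ (x : α) (i : ℤ), D x ((τ ^ i) x) := by
    intro x i
    induction i using Int.induction_on with
    | zero => simpa using hDequiv.refl x
    | succ n ihn =>
        have hstep : (τ ^ ((n : ℤ) + 1)) x = τ ((τ ^ (n : ℤ)) x) := by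
          rw [add_comm, _root_.zpow_add, zpow_one]; rfl
        rw [hstep]
        exact hDequiv.trans ihn (key _)
    | pred n ihn =>
        have hstep : (τ ^ (-(n : ℤ) - 1)) x = τ⁻¹ ((τ ^ (-(n : ℤ))) x) := by
          rw [sub_eq_add_neg, add_comm, _root_.zpow_add, _root_.zpow_neg, zpow_one]; rfl
        rw [hstep]
        exact hDequiv.trans ihn (keyinv _)
  have hle : ∀ x y : α, τ.SameCycle x y → D x y := by
    rintro x y ⟨i, hi⟩
    exact hi ▸ hzpow x i
  letI sD : Setoid α := ⟨D, hDequiv⟩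
  have h1 : Nat.card (Quotient sD) ≤ Nat.card (Quotient (Equiv.Perm.SameCycle.setoid τ)) := by
    apply Nat.card_le_card_of_surjective
      (Quotient.map' (s₁ := Equiv.Perm.SameCycle.setoid τ) (s₂ := sD) id (fun x y h => hle x y h))
    intro q
    induction q using Quotient.inductionOn with
    | _ x => exact ⟨Quotient.mk _ x, rfl⟩
  have wd2 : ∀ x y : α, τ'.SameCycle x y →
      (if τ'.SameCycle x b then (Sum.inr () : Quotient sD ⊕ Unit)
        else Sum.inl (Quotient.mk sD x))
      = (if τ'.SameCycle y b then (Sum.inr () : Quotient sD ⊕ Unit)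
        else Sum.inl (Quotient.mk sD y)) := by
    intro x y hxy
    by_cases hxb : τ'.SameCycle x b
    · rw [if_pos hxb, if_pos (hxy.symm.trans hxb)]
    · rw [if_neg hxb, if_neg (fun h => hxb (hxy.trans h))]
      exact congrArg Sum.inl (Quotient.sound (Or.inl hxy))
  have hinj : Function.Injective
      (Quotient.lift (s := Equiv.Perm.SameCycle.setoid τ') _ wd2) := by
    intro q1 q2
    induction q1 using Quotient.inductionOn with
    | _ x =>
    induction q2 using Quotient.inductionOn with
    | _ y =>
    intro h
    simp only [Quotient.lift_mk] at h
    apply Quotient.sound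
    by_cases hxb : τ'.SameCycle x b
    · by_cases hyb : τ'.SameCycle y b
      · exact hxb.trans hyb.symm
      · rw [if_pos hxb, if_neg hyb] at h; exact absurd h (by simp)
    · by_cases hyb : τ'.SameCycle y b
      · rw [if_neg hxb, if_pos hyb] at h; exact absurd h (by simp)
      · rw [if_neg hxb, if_neg hyb] at h
        simp only [Sum.inl.injEq] at h
        have hD := Quotient.exact h
        rcases hD with hD | ⟨h1, h2⟩ | ⟨h1, h2⟩
        · exact hD
        · exact absurd h2 hyb
        · exact absurd h1 hxb
  have h2 : Nat.card (Quotient (Equiv.Perm.SameCycle.setoid τ'))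
      ≤ Nat.card (Quotient sD ⊕ Unit) :=
    Nat.card_le_card_of_injective _ hinj
  rw [Nat.card_sum] at h2
  simp only [Nat.card_unique] at h2
  omega

lemma parts_card_swap (σ' : Equiv.Perm α) (a b : α) (hab : a ≠ b)
    (σ : Equiv.Perm α) (hσ : σ = σ' * Equiv.swap a b) :
    σ.partition.parts.card = σ'.partition.parts.card + 1
      ∨ σ'.partition.parts.card = σ.partition.parts.card + 1 := by
  classical
  have hsign : Equiv.Perm.sign σ = - Equiv.Perm.sign σ' := by
    rw [hσ, Equiv.Perm.sign_mul, Equiv.Perm.sign_swap hab, mul_neg_one]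
  have he : (-1 : ℤˣ) ^ (σ.cycleType.sum + Multiset.card σ.cycleType)
      = - ((-1 : ℤˣ) ^ (σ'.cycleType.sum + Multiset.card σ'.cycleType)) := by
    rw [← Equiv.Perm.sign_of_cycleType, ← Equiv.Perm.sign_of_cycleType]
    exact hsign
  have hodd : ¬ Even ((σ.cycleType.sum + Multiset.card σ.cycleType) +
      (σ'.cycleType.sum + Multiset.card σ'.cycleType)) := by
    intro hev
    have h1 : ((-1 : ℤˣ)) ^ ((σ.cycleType.sum + Multiset.card σ.cycleType) + (σ'.cycleType.sum + Multiset.card σ'.cycleType)) = 1 := hev.neg_one_pow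
    rw [pow_add, he, neg_mul, ← pow_add] at h1
    rw [Even.neg_one_pow (Even.add_self _)] at h1
    exact absurd h1 (by decide)
  have hp : σ.partition.parts.card
      = Multiset.card σ.cycleType + (Fintype.card α - σ.support.card) := by
    rw [Equiv.Perm.parts_partition, Multiset.card_add, Multiset.card_replicate]
  have hp' : σ'.partition.parts.card
      = Multiset.card σ'.cycleType + (Fintype.card α - σ'.support.card) := by
    rw [Equiv.Perm.parts_partition, Multiset.card_add, Multiset.card_replicate]
  have hsum : σ.cycleType.sum = σ.support.card := Equiv.Perm.sum_cycleType σ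
  have hsum' : σ'.cycleType.sum = σ'.support.card := Equiv.Perm.sum_cycleType σ'
  have hle : σ.support.card ≤ Fintype.card α := Finset.card_le_univ _
  have hle' : σ'.support.card ≤ Fintype.card α := Finset.card_le_univ _
  have i1 : σ.partition.parts.card ≤ σ'.partition.parts.card + 1 := by
    rw [parts_card_eq, parts_card_eq]
    have := quot_card_mul_swap_le σ' a b
    rw [← hσ] at this
    exact this
  have hσ2 : σ' = σ * Equiv.swap a b := by
    rw [hσ, mul_assoc, Equiv.swap_mul_self, mul_one]
  have i2 : σ'.partition.parts.card ≤ σ.partition.parts.card + 1 := by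
    rw [parts_card_eq, parts_card_eq]
    have := quot_card_mul_swap_le σ a b
    rw [← hσ2] at this
    exact this
  rw [Nat.not_even_iff_odd, Nat.odd_iff] at hodd
  omega

end PermLemmas

end XiAuxLemmas

/-- deleting the maximal arrow `i` (the last arrow, of index `n`) from a
loop-less quiver `Q` yields `Q'` with `ξ⁻_Q = ξ⁻_{Q'} ∘ [s(i), t(i)]`; consequently the
number of cycles of `ξ⁻_Q` and of `ξ⁻_{Q'}` differ by exactly one. -/
theorem xiDown_remove_max_arrow {m n : ℕ} (s t : Fin (n + 1) → Fin m)
    (hloop : ∀ i : Fin (n + 1), s i ≠ t i)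
    (σ σ' : Equiv.Perm (Fin m))
    (hσ : ∀ v : Fin m, σ v = xiDown s t v)
    (hσ' : ∀ v : Fin m, σ' v = xiDown (s ∘ Fin.castSucc) (t ∘ Fin.castSucc) v) :
    (∀ v : Fin m,
        xiDown s t v
          = xiDown (s ∘ Fin.castSucc) (t ∘ Fin.castSucc)
              (Equiv.swap (s (Fin.last n)) (t (Fin.last n)) v))
    ∧ (σ.partition.parts.card = σ'.partition.parts.card + 1
        ∨ σ'.partition.parts.card = σ.partition.parts.card + 1) := by
  have hab : s (Fin.last n) ≠ t (Fin.last n) := hloop _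
  have part1 : ∀ v : Fin m,
      xiDown s t v
        = xiDown (s ∘ Fin.castSucc) (t ∘ Fin.castSucc)
            (Equiv.swap (s (Fin.last n)) (t (Fin.last n)) v) := xiDown_step s t hloop
  refine ⟨part1, ?_⟩
  have hσeq : σ = σ' * Equiv.swap (s (Fin.last n)) (t (Fin.last n)) := by
    ext v
    rw [hσ v, part1 v, Equiv.Perm.mul_apply, hσ']
  exact parts_card_swap σ' _ _ hab σ hσeq
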